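/- arXiv:2504.19751 — 3 statements merged into one kernel-verified Lean document; each statement's English description precedes it below -/
import Mathlib

section
/- For every graph G, tw(G) + 1 ≤ tree-α(G) · χ(G), where tree-α(G) is the minimum over tree-decompositions of G of the maximum independence number of a subgraph induced by a bag. -/
open SimpleGraph

structure TreeDecomp {V : Type} (G : SimpleGraph V) where
  ι : Type
  tree : SimpleGraph ι
  isTree : tree.IsTree
  bag : ι → Finset V
  covers_edge : ∀ ⦃u v : V⦄, G.Adj u v → ∃ t, u ∈ bag t ∧ v ∈ bag t
  support_connected : ∀ v : V, (tree.induce {t | v ∈ bag t}).Connected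

noncomputable def indepNum {V : Type} (G : SimpleGraph V) (s : Set V) : ℕ :=
  sSup {n | ∃ t : Finset V, ↑t ⊆ s ∧ (↑t : Set V).Pairwise (fun a b => ¬ G.Adj a b) ∧ t.card = n}

noncomputable def alpha {V : Type} (G : SimpleGraph V) : ℕ := indepNum G Set.univ

noncomputable def chiNat {V : Type} (G : SimpleGraph V) : ℕ := G.chromaticNumber.toNat

noncomputable def tw {V : Type} (G : SimpleGraph V) : ℕ :=
  sInf {w | ∃ D : TreeDecomp G, ∀ t, (D.bag t).card ≤ w + 1}

noncomputable def treeAlpha {V : Type} (G : SimpleGraph V) : ℕ :=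
  sInf {k | ∃ D : TreeDecomp G, ∀ t, indepNum G ↑(D.bag t) ≤ k}

noncomputable def treeChi {V : Type} (G : SimpleGraph V) : ℕ :=
  sInf {k | ∃ D : TreeDecomp G, ∀ t, chiNat (G.induce ↑(D.bag t)) ≤ k}

noncomputable def treeTw {V : Type} (G : SimpleGraph V) : ℕ :=
  sInf {k | ∃ D : TreeDecomp G, ∀ t, tw (G.induce ↑(D.bag t)) ≤ k}

noncomputable def omegaNum {V : Type} (G : SimpleGraph V) : ℕ :=
  sSup {n | ∃ t : Finset V, G.IsClique ↑t ∧ t.card = n}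

def completion {V : Type} (H : SimpleGraph V) :
    SimpleGraph (V ⊕ {p : Sym2 V // ¬ p.IsDiag ∧ p ∉ H.edgeSet}) :=
  SimpleGraph.fromRel (fun x y =>
    match x, y with
    | .inl u, .inl v => H.Adj u v
    | .inl u, .inr p => u ∈ p.1
    | _, _ => False)

lemma conn_of_subsingleton {ι : Type} [Nonempty ι] [Subsingleton ι] (H : SimpleGraph ι) :
    H.Connected :=
  ⟨fun a b => by rw [Subsingleton.elim a b]⟩

noncomputable def trivDecomp {V : Type} [Fintype V] (G : SimpleGraph V) : TreeDecomp G where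
  ι := Unit
  tree := ⊥
  isTree := ⟨conn_of_subsingleton _, isAcyclic_bot⟩
  bag := fun _ => Finset.univ
  covers_edge := fun u v _ => ⟨(), by simp⟩
  support_connected := fun v => by
    have : Nonempty {t : Unit | v ∈ (fun _ => (Finset.univ : Finset V)) t} := ⟨⟨(), by simp⟩⟩
    exact conn_of_subsingleton _

lemma indep_bdd {V : Type} [Fintype V] (G : SimpleGraph V) (s : Set V) :
    BddAbove {n | ∃ t : Finset V, ↑t ⊆ s ∧ (↑t : Set V).Pairwise (fun a b => ¬ G.Adj a b) ∧ t.card = n} :=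
  ⟨Fintype.card V, fun n hn => by obtain ⟨t, _, _, ht⟩ := hn; exact ht ▸ t.card_le_univ⟩

lemma le_indep {V : Type} [Fintype V] (G : SimpleGraph V) (s : Set V) (t : Finset V)
    (h1 : ↑t ⊆ s) (h2 : (↑t : Set V).Pairwise (fun a b => ¬ G.Adj a b)) :
    t.card ≤ indepNum G s :=
  le_csSup (indep_bdd G s) ⟨t, h1, h2, rfl⟩

lemma card_le_indep_mul_chi {V : Type} [Fintype V] (G : SimpleGraph V) (X : Finset V) :
    X.card ≤ indepNum G ↑X * chiNat G := by
  classical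
  obtain ⟨C⟩ := colorable_chromaticNumber_of_fintype G
  have hcard : X.card = ∑ c : Fin (chiNat G), (X.filter fun v => C v = c).card :=
    by unfold chiNat; convert Finset.card_eq_sum_card_fiberwise (f := fun v => C v) (fun x _ => Finset.mem_univ _)
  rw [hcard]
  calc ∑ c : Fin (chiNat G), (X.filter fun v => C v = c).card
      ≤ ∑ _c : Fin (chiNat G), indepNum G ↑X := by
        refine Finset.sum_le_sum fun c _ => ?_
        refine le_indep G ↑X _ (fun v hv => (Finset.filter_subset _ _) hv) ?_
        intro a ha b hb hab hadj
        simp only [Finset.coe_filter, Set.mem_setOf_eq] at ha hb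
        exact C.valid hadj (ha.2.trans hb.2.symm)
    _ = indepNum G ↑X * chiNat G := by
        simp [Finset.sum_const, mul_comm]

theorem stmt2 {V : Type} [Fintype V] [Nonempty V] (G : SimpleGraph V) :
    tw G + 1 ≤ treeAlpha G * chiNat G := by
  -- chiNat ≥ 1
  have hchi : 1 ≤ chiNat G := by
    obtain ⟨C⟩ := colorable_chromaticNumber_of_fintype G
    have : Nonempty (Fin (chiNat G)) := ⟨C (Classical.arbitrary V)⟩
    exact Fin.pos_iff_nonempty.mpr this
  have hne : {k | ∃ D : TreeDecomp G, ∀ t, indepNum G ↑(D.bag t) ≤ k}.Nonempty :=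
    ⟨indepNum G ↑(Finset.univ : Finset V), trivDecomp G, fun t => le_refl _⟩
  obtain ⟨D, hD⟩ := Nat.sInf_mem hne
  have hta : 1 ≤ treeAlpha G := by
    obtain ⟨v⟩ := ‹Nonempty V›
    have hconn := D.support_connected v
    obtain ⟨t, ht⟩ := hconn.nonempty
    calc (1 : ℕ) = ({v} : Finset V).card := by simp
      _ ≤ indepNum G ↑(D.bag t) := le_indep G _ _ (by simpa using ht) (by simp)
      _ ≤ treeAlpha G := hD t
  set A := treeAlpha G * chiNat G with hA
  have hA1 : 1 ≤ A := le_trans hta (Nat.le_mul_of_pos_right _ hchi)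
  have htw : tw G ≤ A - 1 := by
    apply Nat.sInf_le
    refine ⟨D, fun t => ?_⟩
    rw [Nat.sub_add_cancel hA1]
    calc (D.bag t).card ≤ indepNum G ↑(D.bag t) * chiNat G := card_le_indep_mul_chi G _
      _ ≤ A := Nat.mul_le_mul_right _ (hD t)
  calc tw G + 1 ≤ (A - 1) + 1 := Nat.add_le_add_right htw 1
    _ = A := Nat.sub_add_cancel hA1
end

section
/- For every graph G, tw(G) + 1 ≤ tree-α(G)^2 · tree-χ(G). -/
open SimpleGraph

section TreeGeom
variable {ι : Type} {T : SimpleGraph ι}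

lemma tree_path_length (hT : T.IsTree) {x y : ι} (p : T.Walk x y) (hp : p.IsPath) :
    p.length = T.dist x y := by
  classical
  refine le_antisymm ?_ (SimpleGraph.dist_le p)
  obtain ⟨q, hq⟩ := hT.isConnected.exists_walk_length_eq_dist x y
  have h1 : p = q.bypass := ((hT.existsUnique_path x y).unique hp q.bypass_isPath)
  rw [h1]
  calc q.bypass.length ≤ q.length := q.length_bypass_le
  _ = T.dist x y := hq

lemma tree_adj_depth (hT : T.IsTree) {r x y : ι} (h : T.Adj x y) :
    T.dist r y = T.dist r x + 1 ∨ T.dist r x = T.dist r y + 1 := by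
  classical
  obtain ⟨P, hP, -⟩ := hT.existsUnique_path r x
  by_cases hy : y ∈ P.support
  · right
    have htake : (P.takeUntil y hy).length = T.dist r y :=
      tree_path_length hT _ (hP.takeUntil hy)
    have hdrop : (P.dropUntil y hy).length = T.dist y x :=
      tree_path_length hT _ (hP.dropUntil hy)
    have hsum : (P.takeUntil y hy).length + (P.dropUntil y hy).length = P.length := by
      rw [← SimpleGraph.Walk.length_append, P.take_spec hy]
    have hyx : T.dist y x = 1 := SimpleGraph.dist_eq_one_iff_adj.mpr h.symm
    have hPx : P.length = T.dist r x := tree_path_length hT P hP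
    omega
  · left
    have hP' : (SimpleGraph.Walk.cons h.symm P.reverse).IsPath := by
      rw [SimpleGraph.Walk.cons_isPath_iff]
      exact ⟨hP.reverse, by simpa using hy⟩
    have := tree_path_length hT _ hP'.reverse
    have hPx : P.length = T.dist r x := tree_path_length hT P hP
    simp only [SimpleGraph.Walk.length_reverse, SimpleGraph.Walk.length_cons] at this
    omega

lemma tree_parent_unique (hT : T.IsTree) {r x a b : ι} (ha : T.Adj x a) (hb : T.Adj x b)
    (hda : T.dist r a + 1 = T.dist r x) (hdb : T.dist r b + 1 = T.dist r x) : a = b := by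
  classical
  obtain ⟨Q, hQ, hQu⟩ := hT.existsUnique_path x r
  have key : ∀ z : ι, T.Adj x z → T.dist r z + 1 = T.dist r x → z = Q.getVert 1 := by
    intro z hz hdz
    obtain ⟨Pz, hPz, -⟩ := hT.existsUnique_path z r
    have hx : x ∉ Pz.support := by
      intro hx
      have htake : (Pz.takeUntil x hx).length = T.dist z x :=
        tree_path_length hT _ (hPz.takeUntil hx)
      have hdrop : (Pz.dropUntil x hx).length = T.dist x r :=
        tree_path_length hT _ (hPz.dropUntil hx)
      have hsum : (Pz.takeUntil x hx).length + (Pz.dropUntil x hx).length = Pz.length := by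
        rw [← SimpleGraph.Walk.length_append, Pz.take_spec hx]
      have hzx : T.dist z x = 1 := SimpleGraph.dist_eq_one_iff_adj.mpr hz.symm
      have h1 : Pz.length = T.dist z r := tree_path_length hT Pz hPz
      rw [SimpleGraph.dist_comm] at h1
      rw [SimpleGraph.dist_comm] at hdrop
      omega
    have hW : (SimpleGraph.Walk.cons hz Pz).IsPath := by
      rw [SimpleGraph.Walk.cons_isPath_iff]; exact ⟨hPz, hx⟩
    have hEq : SimpleGraph.Walk.cons hz Pz = Q := hQu _ hW
    have : (SimpleGraph.Walk.cons hz Pz).getVert 1 = z := by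
      simp [SimpleGraph.Walk.getVert_cons_succ]
    rw [← this, hEq]
  rw [key a ha hda, key b hb hdb]

lemma tree_desc (hT : T.IsTree) {r : ι} : ∀ {x y : ι} (p : T.Walk x y), p.IsPath →
    T.dist r y < T.dist r x → ∃ z, T.Adj x z ∧ T.dist r z + 1 = T.dist r x ∧ z ∈ p.support := by
  intro x y p
  induction p with
  | nil => intro _ hlt; omega
  | @cons x z y h q ih =>
    intro hp hlt
    have hq : q.IsPath := hp.of_cons
    have hxns : x ∉ q.support := ((SimpleGraph.Walk.cons_isPath_iff h q).mp hp).2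
    rcases tree_adj_depth hT (r := r) h with hcase | hcase
    · -- dist r z = dist r x + 1
      exfalso
      obtain ⟨z₂, h2adj, h2d, h2mem⟩ := ih hq (by omega)
      have : z₂ = x := tree_parent_unique hT (r := r) h2adj h.symm (by omega) (by omega)
      exact hxns (this ▸ h2mem)
    · exact ⟨z, h, by omega, by simp⟩

lemma connected_induce_walk {A : Set ι} (hA : (T.induce A).Connected) {x y : ι}
    (hx : x ∈ A) (hy : y ∈ A) :
    ∃ p : T.Walk x y, p.IsPath ∧ ∀ z ∈ p.support, z ∈ A := by
  classical
  obtain ⟨w⟩ := hA ⟨x, hx⟩ ⟨y, hy⟩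
  let f : T.induce A →g T := ⟨Subtype.val, fun {a b} hab => hab⟩
  refine ⟨(w.map f).bypass, SimpleGraph.Walk.bypass_isPath _, fun z hz => ?_⟩
  have h2 := SimpleGraph.Walk.support_bypass_subset _ hz
  rw [SimpleGraph.Walk.support_map] at h2
  obtain ⟨z', _, rfl⟩ := List.mem_map.mp h2
  exact z'.2

lemma tree_min_unique (hT : T.IsTree) {r : ι} {A : Set ι} (hA : (T.induce A).Connected)
    {m z : ι} (hm : m ∈ A) (hz : z ∈ A) (hmin : ∀ a ∈ A, T.dist r m ≤ T.dist r a)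
    (hdz : T.dist r z = T.dist r m) : z = m := by
  by_contra hne
  obtain ⟨p, hp, hsub⟩ := connected_induce_walk hA hz hm
  cases p with
  | nil => exact hne rfl
  | @cons _ c _ h q =>
    have hq : q.IsPath := hp.of_cons
    have hxns : z ∉ q.support := ((SimpleGraph.Walk.cons_isPath_iff h q).mp hp).2
    have hcA : c ∈ A := hsub c (by simp)
    rcases tree_adj_depth hT (r := r) h with hcase | hcase
    · -- dist r c = dist r z + 1, so dist r m < dist r c
      obtain ⟨z₂, h2adj, h2d, h2mem⟩ := tree_desc hT (r := r) q hq (by have := hmin c hcA; omega)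
      have : z₂ = z := tree_parent_unique hT (r := r) h2adj h.symm (by omega) (by omega)
      exact hxns (this ▸ h2mem)
    · have := hmin c hcA; omega

lemma tree_descend (hT : T.IsTree) {r : ι} {A B : Set ι}
    (hA : (T.induce A).Connected) (hB : (T.induce B).Connected)
    {m m' : ι} (hm : m ∈ A) (hm' : m' ∈ B)
    (hminA : ∀ a ∈ A, T.dist r m ≤ T.dist r a) (hminB : ∀ b ∈ B, T.dist r m' ≤ T.dist r b)
    (hmm : T.dist r m' ≤ T.dist r m) :
    ∀ n z, T.dist r z = n → z ∈ A → z ∈ B → m ∈ B := by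
  intro n
  induction n using Nat.strong_induction_on with
  | _ n ih =>
    intro z hdz hzA hzB
    by_cases hcase : T.dist r z ≤ T.dist r m
    · have : z = m := tree_min_unique hT hA hm hzA hminA (le_antisymm hcase (hminA z hzA))
      exact this ▸ hzB
    · push_neg at hcase
      obtain ⟨pA, hpA, hsubA⟩ := connected_induce_walk hA hzA hm
      obtain ⟨z₁, h1adj, h1d, h1mem⟩ := tree_desc hT pA hpA hcase
      obtain ⟨pB, hpB, hsubB⟩ := connected_induce_walk hB hzB hm'
      obtain ⟨z₂, h2adj, h2d, h2mem⟩ := tree_desc hT pB hpB (lt_of_le_of_lt hmm hcase)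
      have hz12 : z₁ = z₂ := tree_parent_unique hT h1adj h2adj h1d h2d
      exact ih (T.dist r z₁) (by omega) z₁ rfl (hsubA _ h1mem) (hz12 ▸ hsubB _ h2mem)

end TreeGeom

section Chi

lemma colorable_chiNat {W : Type} [Fintype W] (Y : SimpleGraph W) : Y.Colorable (chiNat Y) :=
  Y.colorable_chromaticNumber_of_fintype

lemma chiNat_le {W : Type} {Y : SimpleGraph W} {n : ℕ} (h : Y.Colorable n) : chiNat Y ≤ n := by
  have h2 := h.chromaticNumber_le
  have := ENat.toNat_le_toNat h2 (by simp)
  simpa [chiNat] using this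

lemma colorable_of_hom {W W' : Type} {Y : SimpleGraph W} {Y' : SimpleGraph W'}
    (f : Y →g Y') {n : ℕ} (h : Y'.Colorable n) : Y.Colorable n := by
  obtain ⟨C⟩ := h
  exact ⟨SimpleGraph.Hom.comp C f⟩

lemma chiNat_pos {W : Type} [Fintype W] [Nonempty W] (Y : SimpleGraph W) : 1 ≤ chiNat Y := by
  by_contra h
  have h0 : chiNat Y = 0 := by omega
  obtain ⟨C⟩ := colorable_chiNat Y
  rw [h0] at C
  exact (C (Classical.arbitrary W)).elim0

end Chi

section Indep

lemma le_indepNum {V : Type} [Fintype V] (G : SimpleGraph V) {s : Set V} {t : Finset V}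
    (h1 : ↑t ⊆ s) (h2 : (↑t : Set V).Pairwise (fun a b => ¬ G.Adj a b)) :
    t.card ≤ indepNum G s := by
  apply le_csSup
  · exact ⟨Fintype.card V, fun n hn => by obtain ⟨u, _, _, rfl⟩ := hn; exact u.card_le_univ⟩
  · exact ⟨t, h1, h2, rfl⟩

lemma indepNum_le {V : Type} (G : SimpleGraph V) {s : Set V} {m : ℕ}
    (h : ∀ t : Finset V, ↑t ⊆ s → (↑t : Set V).Pairwise (fun a b => ¬ G.Adj a b) → t.card ≤ m) :
    indepNum G s ≤ m := by
  apply csSup_le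
  · exact ⟨0, ∅, by simp⟩
  · rintro n ⟨t, h1, h2, rfl⟩
    exact h t h1 h2

lemma indepNum_induce_le {V : Type} [Fintype V] (G : SimpleGraph V) (S : Set V) (B : Set ↥S) :
    indepNum (G.induce S) B ≤ indepNum G S := by
  apply indepNum_le
  intro t ht hp
  have hcard : (t.map ⟨Subtype.val, Subtype.val_injective⟩).card = t.card := Finset.card_map _
  rw [← hcard]
  apply le_indepNum G
  · intro x hx
    rw [Finset.coe_map] at hx
    obtain ⟨y, _, rfl⟩ := hx
    exact y.2
  · rw [Finset.coe_map]
    rintro a ⟨a', ha', rfl⟩ b ⟨b', hb', rfl⟩ hne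
    have hne' : a' ≠ b' := fun h => hne (by rw [h])
    exact hp ha' hb' hne'

lemma card_le_indep_mul_chi_s3 {W : Type} [Fintype W] (Y : SimpleGraph W) (s : Finset W) :
    s.card ≤ indepNum Y ↑s * chiNat (Y.induce ↑s) := by
  classical
  obtain ⟨C⟩ := colorable_chiNat (Y.induce (↑s : Set W))
  have hcard : s.card = (Finset.univ : Finset ↥(↑s : Set W)).card := by
    rw [Finset.card_univ]
    simp [Fintype.card_coe]
  rw [hcard]
  rw [Finset.card_eq_sum_card_fiberwise (f := fun x => C x) (t := Finset.univ)
    (fun x _ => Finset.mem_univ _)]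
  have hfib : ∀ i : Fin (chiNat (Y.induce (↑s : Set W))),
      ((Finset.univ : Finset ↥(↑s : Set W)).filter (fun x => C x = i)).card ≤ indepNum Y ↑s := by
    intro i
    set F := (Finset.univ : Finset ↥(↑s : Set W)).filter (fun x => C x = i) with hF
    have : (F.map ⟨Subtype.val, Subtype.val_injective⟩).card = F.card := Finset.card_map _
    rw [← this]
    apply le_indepNum Y
    · intro x hx
      rw [Finset.coe_map] at hx
      obtain ⟨y, _, rfl⟩ := hx
      exact y.2
    · rw [Finset.coe_map]
      rintro a ⟨a', ha', rfl⟩ b ⟨b', hb', rfl⟩ hne hadj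
      have hne' : a' ≠ b' := fun h => hne (by rw [h])
      have h1 : C a' = i := by simpa [hF] using ha'
      have h2 : C b' = i := by simpa [hF] using hb'
      have : (Y.induce (↑s : Set W)).Adj a' b' := hadj
      exact C.valid this (h1.trans h2.symm)
  calc ∑ i : Fin (chiNat (Y.induce (↑s : Set W))),
        ((Finset.univ : Finset ↥(↑s : Set W)).filter (fun x => C x = i)).card
      ≤ ∑ _i : Fin (chiNat (Y.induce (↑s : Set W))), indepNum Y ↑s :=
        Finset.sum_le_sum (fun i _ => hfib i)
    _ = chiNat (Y.induce ↑s) * indepNum Y ↑s := by simp [mul_comm]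
    _ = indepNum Y ↑s * chiNat (Y.induce ↑s) := mul_comm _ _

end Indep

section Decomp

lemma connected_of_subsingleton {W : Type} (G : SimpleGraph W) [Subsingleton W] (h : Nonempty W) :
    G.Connected := by
  haveI := h
  constructor
  intro a b
  rw [Subsingleton.elim a b]

def trivialDecomp {V : Type} [Fintype V] (G : SimpleGraph V) : TreeDecomp G where
  ι := Unit
  tree := ⊥
  isTree := ⟨connected_of_subsingleton _ ⟨()⟩, SimpleGraph.isAcyclic_bot⟩
  bag _ := Finset.univ
  covers_edge _ _ _ := ⟨(), Finset.mem_univ _, Finset.mem_univ _⟩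
  support_connected v := connected_of_subsingleton _ ⟨⟨(), Finset.mem_univ v⟩⟩

def TreeDecomp.restrict {V : Type} {G : SimpleGraph V} (D : TreeDecomp G) (s : Set V)
    [DecidablePred (· ∈ s)] : TreeDecomp (G.induce s) where
  ι := D.ι
  tree := D.tree
  isTree := D.isTree
  bag t := (D.bag t).subtype (· ∈ s)
  covers_edge := by
    intro u v huv
    have : G.Adj ↑u ↑v := huv
    obtain ⟨t, h1, h2⟩ := D.covers_edge this
    exact ⟨t, by simp [h1], by simp [h2]⟩
  support_connected := by
    intro v
    have hset : {t | v ∈ (D.bag t).subtype (· ∈ s)} = {t | ↑v ∈ D.bag t} := by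
      ext t; simp
    rw [hset]
    exact D.support_connected ↑v

lemma exists_closed_nbhd_bag {V : Type} [Fintype V] [Nonempty V] (G : SimpleGraph V)
    (D : TreeDecomp G) :
    ∃ (v : V) (t : D.ι), v ∈ D.bag t ∧ ∀ u, G.Adj v u → u ∈ D.bag t := by
  classical
  have hT := D.isTree
  obtain ⟨r⟩ := hT.isConnected.nonempty
  have hmin : ∀ u : V, ∃ t, u ∈ D.bag t ∧
      ∀ t', u ∈ D.bag t' → D.tree.dist r t ≤ D.tree.dist r t' := by
    intro u
    obtain ⟨⟨t₀, ht₀⟩⟩ := (D.support_connected u).nonempty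
    have hne : {n | ∃ t, u ∈ D.bag t ∧ D.tree.dist r t = n}.Nonempty := ⟨_, t₀, ht₀, rfl⟩
    obtain ⟨t, htu, htd⟩ := Nat.sInf_mem hne
    refine ⟨t, htu, fun t' ht' => ?_⟩
    rw [htd]
    exact Nat.sInf_le ⟨t', ht', rfl⟩
  choose tmin htmem htmin using hmin
  obtain ⟨v, -, hv⟩ := Finset.exists_max_image (Finset.univ : Finset V)
    (fun u => D.tree.dist r (tmin u)) ⟨Classical.arbitrary V, Finset.mem_univ _⟩
  refine ⟨v, tmin v, htmem v, fun u hadj => ?_⟩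
  obtain ⟨s, hsv, hsu⟩ := D.covers_edge hadj
  exact tree_descend hT (r := r) (D.support_connected v) (D.support_connected u)
    (htmem v) (htmem u) (htmin v) (htmin u) (hv u (Finset.mem_univ u))
    (D.tree.dist r s) s rfl hsv hsu

lemma colorable_of_bags : ∀ (n : ℕ) (V : Type) [Fintype V] (G : SimpleGraph V)
    (D : TreeDecomp G) (w : ℕ), Fintype.card V ≤ n → (∀ t, (D.bag t).card ≤ w) →
    G.Colorable w := by
  intro n
  induction n with
  | zero =>
    intro V _ G D w hcard _
    have : IsEmpty V := Fintype.card_eq_zero_iff.mp (by omega)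
    exact SimpleGraph.Colorable.of_isEmpty (G := G) w
  | succ n ih =>
    intro V _ G D w hcard hw
    by_cases hne : Nonempty V
    · obtain ⟨v, t₀, hvt, hnb⟩ := exists_closed_nbhd_bag G D
      classical
      set s : Set V := {x | x ≠ v} with hs
      have hw1 : 1 ≤ w := le_trans (Finset.card_pos.mpr ⟨v, hvt⟩) (hw t₀)
      have hcard' : Fintype.card ↥s ≤ n := by
        have : Fintype.card ↥s < Fintype.card V :=
          Fintype.card_subtype_lt (x := v) (by simp [hs])
        omega
      have hbags : ∀ t, (((D.restrict s).bag t)).card ≤ w := by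
        intro t
        calc ((D.bag t).subtype (· ∈ s)).card = ((D.bag t).filter (· ∈ s)).card :=
              Finset.card_subtype _ _
          _ ≤ (D.bag t).card := Finset.card_filter_le _ _
          _ ≤ w := hw t
      obtain ⟨C⟩ := ih ↥s (G.induce s) (D.restrict s) w hcard' hbags
      let N : Finset V := Finset.univ.filter (fun u => G.Adj v u)
      have hNmem : ∀ {u}, u ∈ N → G.Adj v u := fun hu => (Finset.mem_filter.mp hu).2
      have hNsub : N ⊆ (D.bag t₀).erase v := by
        intro u hu
        exact Finset.mem_erase.mpr ⟨(hNmem hu).ne', hnb u (hNmem hu)⟩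
      have hNcard : N.card ≤ w - 1 := by
        calc N.card ≤ ((D.bag t₀).erase v).card := Finset.card_le_card hNsub
          _ = (D.bag t₀).card - 1 := Finset.card_erase_of_mem hvt
          _ ≤ w - 1 := by have := hw t₀; omega
      let used : Finset (Fin w) := N.attach.image (fun u => C ⟨u.1, (hNmem u.2).ne'⟩)
      have husedcard : used.card < w := by
        calc used.card ≤ N.attach.card := Finset.card_image_le
          _ = N.card := Finset.card_attach
          _ ≤ w - 1 := hNcard
          _ < w := by omega
      obtain ⟨c, hc⟩ : ∃ c : Fin w, c ∉ used := by
        by_contra h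
        push_neg at h
        have hsub : (Finset.univ : Finset (Fin w)) ⊆ used := fun c _ => h c
        have := Finset.card_le_card hsub
        rw [Finset.card_univ, Fintype.card_fin] at this
        omega
      refine ⟨SimpleGraph.Coloring.mk (fun x => if h : x = v then c else C ⟨x, h⟩) ?_⟩
      intro a b hab
      by_cases ha : a = v
      · subst ha
        rw [dif_pos rfl, dif_neg hab.ne']
        intro hEq
        apply hc
        rw [hEq]
        have hbN : b ∈ N := Finset.mem_filter.mpr ⟨Finset.mem_univ _, hab⟩
        exact Finset.mem_image.mpr ⟨⟨b, hbN⟩, Finset.mem_attach _ _, rfl⟩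
      · by_cases hb : b = v
        · subst hb
          rw [dif_neg ha, dif_pos rfl]
          intro hEq
          apply hc
          rw [← hEq]
          have haN : a ∈ N := Finset.mem_filter.mpr ⟨Finset.mem_univ _, hab.symm⟩
          exact Finset.mem_image.mpr ⟨⟨a, haN⟩, Finset.mem_attach _ _, rfl⟩
        · rw [dif_neg ha, dif_neg hb]
          have : (G.induce s).Adj ⟨a, ha⟩ ⟨b, hb⟩ := hab
          exact C.valid this
    · have : IsEmpty V := not_nonempty_iff.mp hne
      exact SimpleGraph.Colorable.of_isEmpty (G := G) w

end Decomp

section Main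

set_option maxHeartbeats 2000000 in
theorem stmt3 {V : Type} [Fintype V] [Nonempty V] (G : SimpleGraph V) :
    tw G + 1 ≤ treeAlpha G ^ 2 * treeChi G := by
  classical
  have hane : {k | ∃ D : TreeDecomp G, ∀ t, indepNum G ↑(D.bag t) ≤ k}.Nonempty := by
    refine ⟨indepNum G ↑(Finset.univ : Finset V), trivialDecomp G, fun t => ?_⟩
    show indepNum G ↑((Finset.univ : Finset V)) ≤ _
    exact le_rfl
  have hcne : {k | ∃ D : TreeDecomp G, ∀ t, chiNat (G.induce ↑(D.bag t)) ≤ k}.Nonempty := by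
    refine ⟨chiNat (G.induce ↑(Finset.univ : Finset V)), trivialDecomp G, fun t => ?_⟩
    show chiNat (G.induce ↑((Finset.univ : Finset V))) ≤ _
    exact le_rfl
  obtain ⟨Da, hDa⟩ : ∃ D : TreeDecomp G, ∀ t, indepNum G ↑(D.bag t) ≤ treeAlpha G :=
    Nat.sInf_mem hane
  obtain ⟨Dc, hDc⟩ : ∃ D : TreeDecomp G, ∀ t, chiNat (G.induce ↑(D.bag t)) ≤ treeChi G :=
    Nat.sInf_mem hcne
  set a := treeAlpha G with ha'
  set c := treeChi G with hc'
  obtain ⟨v0⟩ := ‹Nonempty V›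
  obtain ⟨⟨ta, hta⟩⟩ := (Da.support_connected v0).nonempty
  have ha1 : 1 ≤ a := by
    refine le_trans ?_ (hDa ta)
    have h : ({v0} : Finset V).card ≤ indepNum G ↑(Da.bag ta) := by
      apply le_indepNum G
      · simpa using hta
      · simp
    simpa using h
  obtain ⟨⟨tc, htc⟩⟩ := (Dc.support_connected v0).nonempty
  have hc1 : 1 ≤ c := by
    refine le_trans ?_ (hDc tc)
    haveI : Nonempty ↥(↑(Dc.bag tc) : Set V) := ⟨⟨v0, htc⟩⟩
    exact chiNat_pos _
  have key : ∀ s : Da.ι, (Da.bag s).card ≤ a * (a * c) := by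
    intro s
    set S := Da.bag s with hS
    have hchi : chiNat (G.induce (↑S : Set V)) ≤ a * c := by
      apply chiNat_le
      apply colorable_of_bags (Fintype.card ↥(↑S : Set V)) _ _ (Dc.restrict ↑S) _ le_rfl
      intro t
      set B := (Dc.bag t).subtype (· ∈ (↑S : Set V)) with hB
      have h1 : B.card ≤ indepNum (G.induce (↑S : Set V)) ↑B *
          chiNat ((G.induce (↑S : Set V)).induce ↑B) :=
        card_le_indep_mul_chi_s3 _ B
      have h2 : indepNum (G.induce (↑S : Set V)) ↑B ≤ a :=
        le_trans (indepNum_induce_le G ↑S ↑B) (hDa s)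
      have hf : ∀ x : ↥(↑B : Set ↥(↑S : Set V)), (x : ↥(↑S : Set V)).1 ∈
          (↑(Dc.bag t) : Set V) := by
        intro x
        have hx := x.2
        simp only [hB, Finset.mem_coe, Finset.mem_subtype] at hx
        exact hx
      have h3 : chiNat ((G.induce (↑S : Set V)).induce ↑B) ≤ c := by
        refine le_trans (chiNat_le (colorable_of_hom ?_
          (colorable_chiNat (G.induce (↑(Dc.bag t) : Set V))))) (hDc t)
        exact ⟨fun x => ⟨(x : ↥(↑S : Set V)).1, hf x⟩, fun {p q} h => h⟩
      calc B.card ≤ _ := h1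
        _ ≤ a * c := Nat.mul_le_mul h2 h3
    calc S.card ≤ indepNum G ↑S * chiNat (G.induce ↑S) := card_le_indep_mul_chi_s3 G S
      _ ≤ a * (a * c) := Nat.mul_le_mul (hDa s) hchi
  have h1 : 1 ≤ a * (a * c) := by
    calc (1 : ℕ) = 1 * (1 * 1) := by norm_num
      _ ≤ a * (a * c) := Nat.mul_le_mul ha1 (Nat.mul_le_mul ha1 hc1)
  have htw : tw G ≤ a * (a * c) - 1 := by
    apply Nat.sInf_le
    exact ⟨Da, fun s => by have := key s; omega⟩
  have hring : a ^ 2 * c = a * (a * c) := by ring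
  omega

end Main
end

section
/- If H is a graph with |V(H)| ≥ 3, then tree-α(C(H)) ≤ α(H), where C(H) is the 1-completion of H. -/
open SimpleGraph

def starG (β : Type) : SimpleGraph (Option β) := SimpleGraph.fromRel (fun a _ => a = none)

lemma starG_adj {β : Type} {a b : Option β} :
    (starG β).Adj a b ↔ a ≠ b ∧ (a = none ∨ b = none) := by
  simp [starG, fromRel_adj]

lemma no_nbr_not_reachable {α : Type} {G : SimpleGraph α} {v w : α}
    (h : ∀ x, ¬ G.Adj v x) (hne : v ≠ w) : ¬ G.Reachable v w := by
  rintro ⟨p⟩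
  cases p with
  | nil => exact hne rfl
  | cons h' _ => exact h _ h'

lemma starG_isTree (β : Type) : (starG β).IsTree := by
  constructor
  · haveI : Nonempty (Option β) := ⟨none⟩
    refine ⟨fun a b => ?_⟩
    have key : ∀ x : Option β, (starG β).Reachable x none := by
      intro x
      rcases x with _ | p
      · rfl
      · exact (starG_adj.mpr ⟨Option.some_ne_none p, Or.inr rfl⟩).reachable
    exact (key a).trans (key b).symm
  · rw [isAcyclic_iff_forall_adj_isBridge]
    intro v w hvw
    rw [starG_adj] at hvw
    obtain ⟨hne, hcase⟩ := hvw
    rw [isBridge_iff]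
    suffices h : (starG β).Adj v w ∧ ¬((starG β) \ fromEdgeSet {s(v, w)}).Reachable v w by exact h.2
    constructor
    · exact starG_adj.mpr ⟨hne, hcase⟩
    · rcases hcase with rfl | rfl
      · intro hr
        refine no_nbr_not_reachable (G := starG β \ fromEdgeSet {s(none, w)}) (v := w) ?_ hne.symm hr.symm
        intro x hx
        rw [sdiff_adj, starG_adj, fromEdgeSet_adj] at hx
        obtain ⟨⟨hne2, hc⟩, hns⟩ := hx
        rcases hc with rfl | rfl
        · exact hne rfl
        · exact hns ⟨by rw [Sym2.eq_swap]; exact Set.mem_singleton _, hne2⟩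
      · intro hr
        refine no_nbr_not_reachable (G := starG β \ fromEdgeSet {s(v, none)}) (v := v) ?_ hne hr
        intro x hx
        rw [sdiff_adj, starG_adj, fromEdgeSet_adj] at hx
        obtain ⟨⟨hne2, hc⟩, hns⟩ := hx
        rcases hc with rfl | rfl
        · exact hne rfl
        · exact hns ⟨Set.mem_singleton _, hne2⟩

open Classical in
noncomputable def myBag {V : Type} [Fintype V] (H : SimpleGraph V) :
    Option {p : Sym2 V // ¬ p.IsDiag ∧ p ∉ H.edgeSet} →
      Finset (V ⊕ {p : Sym2 V // ¬ p.IsDiag ∧ p ∉ H.edgeSet})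
  | none => Finset.univ.image Sum.inl
  | some p => insert (Sum.inr p) ((Finset.univ.filter (fun v => v ∈ p.1)).image Sum.inl)

section
variable {V : Type} [Fintype V] (H : SimpleGraph V)

lemma completion_adj_inl_inl {u v : V} :
    (completion H).Adj (Sum.inl u) (Sum.inl v) ↔ H.Adj u v := by
  simp only [completion, fromRel_adj]
  constructor
  · rintro ⟨hne, h | h⟩
    · exact h
    · exact h.symm
  · intro h
    exact ⟨by simpa using h.ne, Or.inl h⟩

lemma completion_adj_inl_inr {u : V} {p : {p : Sym2 V // ¬ p.IsDiag ∧ p ∉ H.edgeSet}} :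
    (completion H).Adj (Sum.inl u) (Sum.inr p) ↔ u ∈ p.1 := by
  simp only [completion, fromRel_adj]
  constructor
  · rintro ⟨hne, h | h⟩
    · exact h
    · exact h.elim
  · intro h
    exact ⟨by simp, Or.inl h⟩

lemma completion_not_adj_inr_inr {p q : {p : Sym2 V // ¬ p.IsDiag ∧ p ∉ H.edgeSet}} :
    ¬ (completion H).Adj (Sum.inr p) (Sum.inr q) := by
  simp only [completion, fromRel_adj]
  rintro ⟨hne, h | h⟩ <;> exact h

lemma le_alpha (t : Finset V) (h : (↑t : Set V).Pairwise (fun a b => ¬ H.Adj a b)) :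
    t.card ≤ alpha H := by
  apply le_csSup
  · exact ⟨Fintype.card V, by rintro n ⟨t, _, _, rfl⟩; exact t.card_le_univ⟩
  · exact ⟨t, Set.subset_univ _, h, rfl⟩

lemma mem_myBag_none (x : V ⊕ {p : Sym2 V // ¬ p.IsDiag ∧ p ∉ H.edgeSet}) :
    x ∈ myBag H none ↔ ∃ v, x = Sum.inl v := by
  simp [myBag, eq_comm]

lemma mem_myBag_some (x : V ⊕ {p : Sym2 V // ¬ p.IsDiag ∧ p ∉ H.edgeSet})
    (p : {p : Sym2 V // ¬ p.IsDiag ∧ p ∉ H.edgeSet}) :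
    x ∈ myBag H (some p) ↔ x = Sum.inr p ∨ ∃ v ∈ p.1, x = Sum.inl v := by
  simp [myBag, eq_comm]

end

theorem stmt7 {V : Type} [Fintype V] (H : SimpleGraph V) (hV : 3 ≤ Fintype.card V) :
    treeAlpha (completion H) ≤ alpha H := by
  classical
  set P := {p : Sym2 V // ¬ p.IsDiag ∧ p ∉ H.edgeSet} with hP
  apply Nat.sInf_le
  refine ⟨⟨Option P, starG P, starG_isTree P, myBag H, ?_, ?_⟩, ?_⟩
  · -- covers_edge
    rintro (u | p) (v | q) h
    · exact ⟨none, (mem_myBag_none H _).mpr ⟨u, rfl⟩, (mem_myBag_none H _).mpr ⟨v, rfl⟩⟩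
    · have hm : u ∈ q.1 := (completion_adj_inl_inr H).mp h
      exact ⟨some q, (mem_myBag_some H _ q).mpr (Or.inr ⟨u, hm, rfl⟩),
        (mem_myBag_some H _ q).mpr (Or.inl rfl)⟩
    · have hm : v ∈ p.1 := (completion_adj_inl_inr H).mp h.symm
      exact ⟨some p, (mem_myBag_some H _ p).mpr (Or.inl rfl),
        (mem_myBag_some H _ p).mpr (Or.inr ⟨v, hm, rfl⟩)⟩
    · exact absurd h (completion_not_adj_inr_inr H)
  · -- support_connected
    rintro (u | p)
    · have hc : (none : Option P) ∈ {t | Sum.inl u ∈ myBag H t} :=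
        (mem_myBag_none H _).mpr ⟨u, rfl⟩
      haveI : Nonempty {t | Sum.inl u ∈ myBag H t} := ⟨⟨none, hc⟩⟩
      refine ⟨fun a b => ?_⟩
      have key : ∀ a : {t | Sum.inl u ∈ myBag H t},
          ((starG P).induce {t | Sum.inl u ∈ myBag H t}).Reachable a ⟨none, hc⟩ := by
        rintro ⟨(_ | q), ha⟩
        · rfl
        · refine SimpleGraph.Adj.reachable ?_
          show (starG P).Adj (some q) none
          exact starG_adj.mpr ⟨Option.some_ne_none q, Or.inr rfl⟩
      exact (key a).trans (key b).symm
    · have hmem : (some p : Option P) ∈ {t | Sum.inr p ∈ myBag H t} :=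
        (mem_myBag_some H _ p).mpr (Or.inl rfl)
      have huniq : ∀ t ∈ {t | Sum.inr p ∈ myBag H t}, t = some p := by
        rintro (_ | q) ht
        · obtain ⟨v, hv⟩ := (mem_myBag_none H _).mp ht
          exact absurd hv (by simp)
        · rcases (mem_myBag_some H _ q).mp ht with h | ⟨v, _, hv⟩
          · rw [Sum.inr.injEq] at h
            rw [h]
          · exact absurd hv (by simp)
      haveI : Nonempty {t | Sum.inr p ∈ myBag H t} := ⟨⟨some p, hmem⟩⟩
      refine ⟨fun a b => ?_⟩
      have hab : a = b := Subtype.ext (by rw [huniq a.1 a.2, huniq b.1 b.2])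
      rw [hab]
  · -- indepNum bound
    intro t
    refine csSup_le ⟨0, ⟨∅, by simp⟩⟩ ?_
    rintro n ⟨s, hsub, hpair, rfl⟩
    rcases t with _ | p
    · -- central bag
      set s' : Finset V := Finset.univ.filter (fun v => Sum.inl v ∈ s) with hs'
      have himg : s'.image Sum.inl = s := by
        ext x
        simp only [hs', Finset.mem_image, Finset.mem_filter, Finset.mem_univ, true_and]
        constructor
        · rintro ⟨v, hv, rfl⟩; exact hv
        · intro hx
          obtain ⟨v, rfl⟩ := (mem_myBag_none H x).mp (hsub hx)
          exact ⟨v, hx, rfl⟩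
      have hcard : s.card = s'.card := by
        rw [← himg, Finset.card_image_of_injective _ Sum.inl_injective]
      rw [hcard]
      apply le_alpha
      intro x hx y hy hxy hadj
      have hx' : Sum.inl x ∈ s := by
        simp only [Finset.mem_coe, hs', Finset.mem_filter] at hx ⊢; exact hx.2
      have hy' : Sum.inl y ∈ s := by
        simp only [Finset.mem_coe, hs', Finset.mem_filter] at hy ⊢; exact hy.2
      exact hpair (Finset.mem_coe.mpr hx') (Finset.mem_coe.mpr hy')
        (by simpa using hxy) ((completion_adj_inl_inl H).mpr hadj)
    · -- leaf bag
      obtain ⟨⟨a, b⟩, hab⟩ := Quot.exists_rep p.1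
      have hab' : s(a, b) = p.1 := hab
      have hne : a ≠ b := by
        intro h
        apply p.2.1
        rw [← hab', h]
        exact Sym2.mk_isDiag_iff.mpr rfl
      have hnadj : ¬ H.Adj a b := by
        intro h
        exact p.2.2 (by rw [← hab']; exact H.mem_edgeSet.mpr h)
      have h2 : 2 ≤ alpha H := by
        have hcard2 : ({a, b} : Finset V).card = 2 := by
          rw [Finset.card_insert_of_notMem (by simp [hne]), Finset.card_singleton]
        have hle := le_alpha H {a, b} ?_
        · exact hcard2 ▸ hle
        intro x hx y hy hxy
        ·
          simp only [Finset.coe_insert, Finset.coe_singleton, Set.mem_insert_iff,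
            Set.mem_singleton_iff] at hx hy
          rcases hx with rfl | rfl <;> rcases hy with rfl | rfl
          · exact absurd rfl hxy
          · exact hnadj
          · exact fun h => hnadj h.symm
          · exact absurd rfl hxy
      refine le_trans ?_ h2
      by_cases hinr : Sum.inr p ∈ s
      · have hall : ∀ x ∈ s, x = Sum.inr p := by
          intro x hx
          rcases (mem_myBag_some H x p).mp (hsub hx) with h | ⟨v, hv, rfl⟩
          · exact h
          · exact absurd ((completion_adj_inl_inr H).mpr hv)
              (Classical.byContradiction fun hh => by
                exact absurd ((completion_adj_inl_inr H).mpr hv)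
                  (hpair (Finset.mem_coe.mpr hx) (Finset.mem_coe.mpr hinr) (by simp)))
        calc s.card ≤ ({Sum.inr p} : Finset _).card :=
              Finset.card_le_card (fun x hx => by simp [hall x hx])
          _ ≤ 2 := by simp
      · have hsubl : s ⊆ {Sum.inl a, Sum.inl b} := by
          intro x hx
          rcases (mem_myBag_some H x p).mp (hsub hx) with rfl | ⟨v, hv, rfl⟩
          · exact absurd hx hinr
          · rw [← hab'] at hv
            rcases Sym2.mem_iff.mp hv with rfl | rfl <;> simp
        calc s.card ≤ ({Sum.inl a, Sum.inl b} : Finset _).card := Finset.card_le_card hsubl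
          _ ≤ 2 := Finset.card_insert_le _ _ |>.trans (by simp)
end
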